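/- For integers n ≥ 2, m ≥ 0 with 2m + n - 3 > 0, and l ≥ 1, the product B(n,l,m)⁻¹ = ∏_{p=1}^{l} (2(m+2p)+n-3)/(2(m+2p)+n-1) satisfies B(n,l,m)⁻¹ ≥ (1 + 4l/(2m+n-3))^{-1/2}. -/

import Mathlib

lemma aux_sq (a : ℝ) (ha : 0 < a) (l : ℕ) :
    a / (a + 4 * l) ≤ (∏ p ∈ Finset.Icc 1 l, ((a + 4 * p) / (a + 4 * p + 2))) ^ 2 := by
  induction l with
  | zero => simp [div_self ha.ne']
  | succ k ih =>
    rw [Finset.prod_Icc_succ_top (by omega : 1 ≤ k + 1)]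
    have hx : (0:ℝ) < a + 4 * k := by positivity
    have h1 : a / (a + 4 * (k + 1 : ℕ)) ≤
        (a / (a + 4 * k)) * ((a + 4 * (k + 1 : ℕ)) / (a + 4 * (k + 1 : ℕ) + 2)) ^ 2 := by
      push_cast
      rw [div_pow, div_mul_div_comm, div_le_div_iff₀ (by positivity) (by positivity)]
      nlinarith [sq_nonneg (a + 4 * (k:ℝ)), hx.le, ha.le]
    refine h1.trans ?_
    rw [mul_pow]
    gcongr
  
theorem stmt_1 (n m : ℤ) (hn : 2 ≤ n) (hm : 0 ≤ m) (h : (0:ℤ) < 2 * m + n - 3)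
    (l : ℕ) (hl : 1 ≤ l) :
    (∏ p ∈ Finset.Icc 1 l,
        ((2 * ((m : ℝ) + 2 * p) + n - 3) / (2 * ((m : ℝ) + 2 * p) + n - 1)))
      ≥ (1 + 4 * (l : ℝ) / (2 * (m : ℝ) + n - 3)) ^ (-(1/2) : ℝ) := by
  set a : ℝ := 2 * (m : ℝ) + n - 3 with ha_def
  have ha : (0:ℝ) < a := by
    have : (0:ℝ) < ((2 * m + n - 3 : ℤ) : ℝ) := by exact_mod_cast h
    push_cast at this
    linarith
  have hprod : (∏ p ∈ Finset.Icc 1 l,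
      ((2 * ((m : ℝ) + 2 * p) + n - 3) / (2 * ((m : ℝ) + 2 * p) + n - 1)))
      = ∏ p ∈ Finset.Icc 1 l, ((a + 4 * p) / (a + 4 * p + 2)) := by
    refine Finset.prod_congr rfl fun p _ => ?_
    rw [ha_def]; ring_nf
  rw [hprod]
  have hpos : (0:ℝ) ≤ ∏ p ∈ Finset.Icc 1 l, ((a + 4 * p) / (a + 4 * p + 2)) :=
    Finset.prod_nonneg fun p _ => by positivity
  have hbase : (0:ℝ) < 1 + 4 * (l : ℝ) / a := by positivity
  have hrhs : (1 + 4 * (l : ℝ) / a) ^ (-(1/2) : ℝ) = Real.sqrt (a / (a + 4 * l)) := by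
    rw [Real.rpow_neg hbase.le, ← Real.sqrt_eq_rpow, ← Real.sqrt_inv]
    congr 1
    rw [eq_div_iff (by positivity)]
    field_simp
  rw [ge_iff_le, hrhs]
  calc Real.sqrt (a / (a + 4 * l))
      ≤ Real.sqrt ((∏ p ∈ Finset.Icc 1 l, ((a + 4 * p) / (a + 4 * p + 2))) ^ 2) :=
        Real.sqrt_le_sqrt (aux_sq a ha l)
    _ = _ := Real.sqrt_sq hpos
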